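/- Let E be a finite-dimensional real normed vector space, let X, Y, Z : ℝ × E → E, let s ∈ ℝ and x₀ ∈ E. Suppose Φ : ℝ × E → E is of class C¹ jointly in both variables, Φ(s, y) = y for all y, and for every t ∈ ℝ and x ∈ E the map τ ↦ Φ(τ, x) has derivative X(t, Φ(t, x)) at τ = t. Suppose further that Z is the pullback of Y by the flow of X, i.e. for all t ∈ ℝ and x ∈ E, (fderiv ℝ (fun y => Φ(t, y)) x)(Z(t, x)) = Y(t, Φ(t, x)). Let ψ : ℝ → E be a function with ψ(s) = x₀ that is differentiable with derivative Z(t, ψ(t)) at every t ∈ ℝ. Then the curve c(t) := Φ(t, ψ(t)) satisfies c(s) = x₀ and is differentiable with derivative X(t, c(t)) + Y(t, c(t)) at every t ∈ ℝ; that is, the flow of X + Y from initial time s is the composition Φ^{X+Y}_{(t,s)} = Φ^X_{(t,s)} ∘ Φ^Z_{(t,s)} with Z = (Φ^X_{(t,s)})*Y. -/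

import Mathlib

theorem flow_of_sum_is_composition
    {E : Type*} [NormedAddCommGroup E] [NormedSpace ℝ E] [FiniteDimensional ℝ E]
    (X Y Z : ℝ × E → E) (s : ℝ) (x₀ : E)
    (Φ : ℝ × E → E) (hΦ : ContDiff ℝ 1 Φ)
    (hs : ∀ y : E, Φ (s, y) = y)
    (hflow : ∀ (t : ℝ) (x : E), HasDerivAt (fun τ : ℝ => Φ (τ, x)) (X (t, Φ (t, x))) t)
    (hZ : ∀ (t : ℝ) (x : E), fderiv ℝ (fun y => Φ (t, y)) x (Z (t, x)) = Y (t, Φ (t, x)))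
    (ψ : ℝ → E) (hψ₀ : ψ s = x₀)
    (hψ : ∀ t : ℝ, HasDerivAt ψ (Z (t, ψ t)) t) :
    Φ (s, ψ s) = x₀ ∧
      ∀ t : ℝ, HasDerivAt (fun τ : ℝ => Φ (τ, ψ τ))
        (X (t, Φ (t, ψ t)) + Y (t, Φ (t, ψ t))) t := by
  refine ⟨by rw [hs, hψ₀], fun t => ?_⟩
  set p : ℝ × E := (t, ψ t) with hp
  have hdΦ : HasFDerivAt Φ (fderiv ℝ Φ p) p :=
    (hΦ.differentiable one_ne_zero p).hasFDerivAt
  set f := fderiv ℝ Φ p with hf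
  -- curve τ ↦ (τ, ψ τ)
  have hγ : HasDerivAt (fun τ : ℝ => (τ, ψ τ)) ((1 : ℝ), Z (t, ψ t)) t :=
    HasDerivAt.prodMk (hasDerivAt_id t) (hψ t)
  have hc : HasDerivAt (fun τ : ℝ => Φ (τ, ψ τ)) (f (1, Z (t, ψ t))) t :=
    hdΦ.comp_hasDerivAt t hγ
  -- identify f (1, 0) with X
  have h10 : f (1, 0) = X (t, Φ (t, ψ t)) := by
    have hι : HasDerivAt (fun τ : ℝ => (τ, ψ t)) ((1 : ℝ), (0 : E)) t :=
      HasDerivAt.prodMk (hasDerivAt_id t) (hasDerivAt_const t (ψ t))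
    have h1 : HasDerivAt (fun τ : ℝ => Φ (τ, ψ t)) (f (1, 0)) t :=
      hdΦ.comp_hasDerivAt t hι
    exact h1.unique (hflow t (ψ t))
  -- identify f (0, Z) with Y
  have h0Z : f (0, Z (t, ψ t)) = Y (t, Φ (t, ψ t)) := by
    have hι : HasFDerivAt (fun y : E => ((t : ℝ), y))
        (ContinuousLinearMap.inr ℝ ℝ E) (ψ t) :=
      HasFDerivAt.prodMk (hasFDerivAt_const t (ψ t)) (hasFDerivAt_id (ψ t))
    have h1 : HasFDerivAt (fun y : E => Φ (t, y))
        (f.comp (ContinuousLinearMap.inr ℝ ℝ E)) (ψ t) :=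
      hdΦ.comp (ψ t) hι
    have := hZ t (ψ t)
    rw [h1.fderiv] at this
    simpa using this
  have hsum : f (1, Z (t, ψ t)) = X (t, Φ (t, ψ t)) + Y (t, Φ (t, ψ t)) := by
    have : ((1 : ℝ), Z (t, ψ t)) = ((1 : ℝ), (0 : E)) + ((0 : ℝ), Z (t, ψ t)) := by
      simp
    rw [this, map_add, h10, h0Z]
  rwa [hsum] at hc
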